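/- Let M be ε-differentially private and S* an invariant set with positive probability under M(x) for all x ∈ X*. Define γ* = (1/(kε)) · log max over pairs (x,x') ∈ X*×X* with d(x,x')=k of [P(M(x') ∈ S*)/P(M(x) ∈ S*)]. Then 0 ≤ γ* ≤ 1, and the constrained mechanism M*(x) ∼ M(x)|M(x) ∈ S* satisfies P(M*(x) ∈ B) ≤ exp((1+γ)kε) P(M*(x') ∈ B) for every γ ∈ [γ*, 1], all k-neighbor pairs x,x' ∈ X*, and all measurable B. -/
import Mathlib

lemma group_dp
    {Ω : Type*} [Fintype Ω] [DecidableEq Ω] {n : ℕ}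
    {E : Type*} [MeasurableSpace E]
    (ε : ℝ)
    (P : (Fin n → Ω) → Set E → ℝ)
    (hDP : ∀ x x' : Fin n → Ω,
      (Finset.univ.filter fun i => x i ≠ x' i).card = 1 →
      ∀ B : Set E, MeasurableSet B → P x B ≤ Real.exp ε * P x' B) :
    ∀ (k : ℕ) (x x' : Fin n → Ω),
      (Finset.univ.filter fun i => x i ≠ x' i).card = k →
      ∀ B : Set E, MeasurableSet B → P x B ≤ Real.exp (k * ε) * P x' B := by
  intro k
  induction k with
  | zero =>
    intro x x' hc B hB
    have hfe : (Finset.univ.filter fun i => x i ≠ x' i) = ∅ := Finset.card_eq_zero.mp hc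
    have hxx : x = x' := by
      funext i
      by_contra h
      have : i ∈ (Finset.univ.filter fun i => x i ≠ x' i) := by simp [h]
      simp [hfe] at this
    subst hxx
    simp
  | succ k ih =>
    intro x x' hc B hB
    have hne : (Finset.univ.filter fun i => x i ≠ x' i).Nonempty := by
      rw [← Finset.card_pos, hc]; omega
    obtain ⟨i, hi⟩ := hne
    have hxi : x i ≠ x' i := (Finset.mem_filter.mp hi).2
    set y := Function.update x i (x' i) with hy
    have h1 : (Finset.univ.filter fun j => x j ≠ y j) = {i} := by
      ext j
      simp only [Finset.mem_filter, Finset.mem_univ, true_and, Finset.mem_singleton, hy,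
        Function.update_apply]
      by_cases hji : j = i <;> simp [hji, hxi]
    have h2 : (Finset.univ.filter fun j => y j ≠ x' j)
        = (Finset.univ.filter fun j => x j ≠ x' j).erase i := by
      ext j
      simp only [Finset.mem_filter, Finset.mem_univ, true_and, Finset.mem_erase, hy,
        Function.update_apply]
      by_cases hji : j = i <;> simp [hji]
    have hc2 : (Finset.univ.filter fun j => y j ≠ x' j).card = k := by
      rw [h2, Finset.card_erase_of_mem hi, hc]; omega
    have step1 := hDP x y (by rw [h1]; simp) B hB
    have step2 := ih y x' hc2 B hB
    have hexp : Real.exp ((k + 1 : ℕ) * ε) = Real.exp ε * Real.exp (k * ε) := by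
      rw [← Real.exp_add]; push_cast; ring_nf
    rw [hexp]
    calc P x B ≤ Real.exp ε * P y B := step1
      _ ≤ Real.exp ε * (Real.exp (k * ε) * P x' B) :=
          mul_le_mul_of_nonneg_left step2 (Real.exp_pos ε).le
      _ = Real.exp ε * Real.exp (k * ε) * P x' B := by ring

/-- the sharper bound exp((1+γ)kε) for the constrained mechanism,
where γ* is defined via the maximum ratio of invariant-set probabilities over
k-neighbor pairs in the finite invariant-conforming set X*. -/
theorem constrained_mechanism_gamma
    {Ω : Type*} [Fintype Ω] [DecidableEq Ω] {n : ℕ}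
    {E : Type*} [MeasurableSpace E]
    (ε : ℝ) (hε : 0 < ε)
    (P : (Fin n → Ω) → Set E → ℝ)
    (hP_nonneg : ∀ x B, 0 ≤ P x B)
    -- ε-differential privacy of the unconstrained mechanism M
    (hDP : ∀ x x' : Fin n → Ω,
      (Finset.univ.filter fun i => x i ≠ x' i).card = 1 →
      ∀ B : Set E, MeasurableSet B → P x B ≤ Real.exp ε * P x' B)
    -- invariant set S* and the finite invariant-conforming set X*
    (Xstar : Finset (Fin n → Ω)) (Sstar : Set E) (hSstar : MeasurableSet Sstar)
    (hpos : ∀ x ∈ Xstar, 0 < P x Sstar)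
    (k : ℕ) (hk : 0 < k)
    -- the set of k-neighbor pairs in X* × X*, assumed nonempty
    (pairs : Finset ((Fin n → Ω) × (Fin n → Ω)))
    (hpairs : pairs = (Xstar ×ˢ Xstar).filter fun p =>
        (Finset.univ.filter fun i => p.1 i ≠ p.2 i).card = k)
    (hne : pairs.Nonempty)
    -- γ* as defined in the theorem
    (γstar : ℝ)
    (hγstar : γstar = (1 / (k * ε)) *
      Real.log (pairs.sup' hne fun p => P p.2 Sstar / P p.1 Sstar)) :
    0 ≤ γstar ∧ γstar ≤ 1 ∧
      ∀ γ ∈ Set.Icc γstar 1,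
        ∀ x ∈ Xstar, ∀ x' ∈ Xstar,
          (Finset.univ.filter fun i => x i ≠ x' i).card = k →
          ∀ B : Set E, MeasurableSet B →
            P x (B ∩ Sstar) / P x Sstar ≤
              Real.exp ((1 + γ) * k * ε) * (P x' (B ∩ Sstar) / P x' Sstar) := by
  have hgdp := group_dp ε P hDP k
  set S := pairs.sup' hne fun p => P p.2 Sstar / P p.1 Sstar with hS
  have hkε : (0 : ℝ) < k * ε := by positivity
  -- facts about membership in pairs
  have hmem : ∀ p ∈ pairs, p.1 ∈ Xstar ∧ p.2 ∈ Xstar ∧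
      (Finset.univ.filter fun i => p.1 i ≠ p.2 i).card = k := by
    intro p hp
    rw [hpairs, Finset.mem_filter, Finset.mem_product] at hp
    exact ⟨hp.1.1, hp.1.2, hp.2⟩
  -- symmetry of pairs
  have hsymm : ∀ p ∈ pairs, (p.2, p.1) ∈ pairs := by
    intro p hp
    obtain ⟨h1, h2, h3⟩ := hmem p hp
    rw [hpairs, Finset.mem_filter, Finset.mem_product]
    refine ⟨⟨h2, h1⟩, ?_⟩
    rw [← h3]
    congr 1
    ext i
    simp [ne_comm]
  -- S ≥ 1
  have hS1 : 1 ≤ S := by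
    obtain ⟨p, hp⟩ := hne
    obtain ⟨h1, h2, -⟩ := hmem p hp
    have hr1 : P p.2 Sstar / P p.1 Sstar ≤ S :=
      Finset.le_sup' (fun p => P p.2 Sstar / P p.1 Sstar) hp
    have hr2 : P p.1 Sstar / P p.2 Sstar ≤ S :=
      Finset.le_sup' (fun p => P p.2 Sstar / P p.1 Sstar) (hsymm p hp)
    have hp1 := hpos _ h1
    have hp2 := hpos _ h2
    have hr : 0 < P p.2 Sstar / P p.1 Sstar := div_pos hp2 hp1
    have hr' : 0 < P p.1 Sstar / P p.2 Sstar := div_pos hp1 hp2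
    have hprod : (P p.2 Sstar / P p.1 Sstar) * (P p.1 Sstar / P p.2 Sstar) = 1 := by
      field_simp
    nlinarith [mul_le_mul hr1 hr2 hr'.le (le_trans hr.le hr1)]
  have hSpos : 0 < S := lt_of_lt_of_le one_pos hS1
  -- S ≤ exp (k ε)
  have hSle : S ≤ Real.exp (k * ε) := by
    apply Finset.sup'_le
    intro p hp
    obtain ⟨h1, h2, h3⟩ := hmem p hp
    have h3' : (Finset.univ.filter fun i => p.2 i ≠ p.1 i).card = k := by
      rw [← h3]; congr 1; ext i; simp [ne_comm]
    have := hgdp p.2 p.1 h3' Sstar hSstar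
    rw [div_le_iff₀ (hpos _ h1)]
    linarith
  have hγ0 : 0 ≤ γstar := by
    rw [hγstar]
    have : 0 ≤ Real.log S := Real.log_nonneg hS1
    positivity
  have hγ1 : γstar ≤ 1 := by
    rw [hγstar]
    rw [div_mul_eq_mul_div, one_mul, div_le_one hkε]
    calc Real.log S ≤ Real.log (Real.exp (k * ε)) :=
          Real.log_le_log hSpos hSle
      _ = k * ε := Real.log_exp _
  refine ⟨hγ0, hγ1, ?_⟩
  intro γ hγ x hx x' hx' hcard B hB
  have hexpS : S = Real.exp (γstar * (k * ε)) := by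
    rw [hγstar, one_div, inv_mul_eq_div, div_mul_cancel₀ _ (ne_of_gt hkε),
      Real.exp_log hSpos]
  have hratio : P x' Sstar / P x Sstar ≤ Real.exp (γ * (k * ε)) := by
    have hmem' : (x, x') ∈ pairs := by
      rw [hpairs, Finset.mem_filter, Finset.mem_product]
      exact ⟨⟨hx, hx'⟩, hcard⟩
    calc P x' Sstar / P x Sstar ≤ S :=
          Finset.le_sup' (fun p => P p.2 Sstar / P p.1 Sstar) hmem'
      _ = Real.exp (γstar * (k * ε)) := hexpS
      _ ≤ Real.exp (γ * (k * ε)) := by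
          apply Real.exp_le_exp.mpr
          exact mul_le_mul_of_nonneg_right hγ.1 hkε.le
  have hmain := hgdp x x' hcard (B ∩ Sstar) (hB.inter hSstar)
  have hsx := hpos _ hx
  have hsx' := hpos _ hx'
  have hbnn := hP_nonneg x' (B ∩ Sstar)
  have hkey : P x (B ∩ Sstar) * P x' Sstar ≤
      Real.exp ((1 + γ) * k * ε) * P x' (B ∩ Sstar) * P x Sstar := by
    have h2 : P x' Sstar ≤ Real.exp (γ * (k * ε)) * P x Sstar := by
      rw [div_le_iff₀ hsx] at hratio; linarith
    calc P x (B ∩ Sstar) * P x' Sstar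
        ≤ (Real.exp (k * ε) * P x' (B ∩ Sstar)) * (Real.exp (γ * (k * ε)) * P x Sstar) := by
          apply mul_le_mul hmain h2 (hP_nonneg _ _)
          positivity
      _ = (Real.exp (k * ε) * Real.exp (γ * (k * ε))) * P x' (B ∩ Sstar) * P x Sstar := by
          ring
      _ = Real.exp ((1 + γ) * k * ε) * P x' (B ∩ Sstar) * P x Sstar := by
          rw [← Real.exp_add]; ring_nf
  rw [← mul_div_assoc, div_le_div_iff₀ hsx hsx']
  exact hkey
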